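/- In a pre-crystalline graded ring A = ⊕_{g∈G} R u_g with u_g r = σ_g(r) u_g and u_g u_h = α(g,h) u_{gh}, the maps σ_g : R → R are surjective ring homomorphisms and σ_e = id_R. -/
import Mathlib


/-- A pre-crystalline graded ring `A = ⊕_{g ∈ G} R u_g`:
`R` is a subring of `A` sharing its unit, `u : G → A` is injective with `u_e = 1`
and `u_g ≠ 0`; (C1) every element of `A` is uniquely a finite sum `Σ r_g u_g`
(the `basis` field), (C2) `R u_g = u_g R` (the `set_eq` field) is free of rank 1
as a left `R`-module (freeness follows from `basis`), and the structure maps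
`σ_g : R → R`, `α : G × G → R` are defined by `u_g r = σ_g(r) u_g` and
`u_g u_h = α(g,h) u_{gh}`. -/
structure PreCrystalline (G A : Type*) [Group G] [Ring A] where
  R : Subring A
  u : G → A
  σ : G → ↥R → ↥R
  α : G → G → ↥R
  u_inj : Function.Injective u
  u_one : u 1 = 1
  u_ne_zero : ∀ g : G, u g ≠ 0
  basis : Function.Bijective (fun f : G →₀ ↥R => f.sum fun g r => (r : A) * u g)
  set_eq : ∀ g : G, {x : A | ∃ r : ↥R, x = (r : A) * u g} =
      {x : A | ∃ r : ↥R, x = u g * (r : A)}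
  comm : ∀ (g : G) (r : ↥R), u g * (r : A) = (σ g r : A) * u g
  mul_u : ∀ g h : G, u g * u h = (α g h : A) * u (g * h)

lemma PreCrystalline.cancel {G A : Type*} [Group G] [Ring A] (P : PreCrystalline G A)
    (g : G) {r s : ↥P.R} (h : (r : A) * P.u g = (s : A) * P.u g) : r = s := by
  have h2 := P.basis.1 (a₁ := Finsupp.single g r) (a₂ := Finsupp.single g s) (by
    simp only [Finsupp.sum_single_index, ZeroMemClass.coe_zero, zero_mul]
    exact h)
  simpa [Finsupp.single_eq_same] using congrArg (fun f : G →₀ ↥P.R => f g) h2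

/-- In a pre-crystalline graded ring, each `σ_g` is a surjective ring
morphism and `σ_e = id_R`. -/
theorem sigma_surjective_ringHom_and_sigma_one {G A : Type*} [Group G] [Ring A]
    (P : PreCrystalline G A) :
    (∀ g : G, Function.Surjective (P.σ g)) ∧
    (∀ (g : G) (r s : ↥P.R), P.σ g (r + s) = P.σ g r + P.σ g s) ∧
    (∀ (g : G) (r s : ↥P.R), P.σ g (r * s) = P.σ g r * P.σ g s) ∧
    (∀ g : G, P.σ g 1 = 1) ∧
    P.σ 1 = id := by
  refine ⟨?_, ?_, ?_, ?_, ?_⟩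
  · intro g r
    have hmem : ((r : A) * P.u g) ∈ {x : A | ∃ r : ↥P.R, x = (r : A) * P.u g} := ⟨r, rfl⟩
    rw [P.set_eq g] at hmem
    obtain ⟨s, hs⟩ := hmem
    exact ⟨s, P.cancel g (by rw [← P.comm, ← hs])⟩
  · intro g r s
    apply P.cancel g
    calc (↑(P.σ g (r + s)) : A) * P.u g = P.u g * ↑(r + s) := (P.comm g _).symm
      _ = P.u g * r + P.u g * s := by push_cast; rw [mul_add]
      _ = ↑(P.σ g r) * P.u g + ↑(P.σ g s) * P.u g := by rw [P.comm, P.comm]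
      _ = ↑(P.σ g r + P.σ g s) * P.u g := by push_cast; rw [add_mul]
  · intro g r s
    apply P.cancel g
    calc (↑(P.σ g (r * s)) : A) * P.u g = P.u g * ↑(r * s) := (P.comm g _).symm
      _ = P.u g * r * s := by push_cast; rw [mul_assoc]
      _ = ↑(P.σ g r) * (P.u g * s) := by rw [P.comm, mul_assoc]
      _ = ↑(P.σ g r) * (↑(P.σ g s) * P.u g) := by rw [P.comm]
      _ = ↑(P.σ g r * P.σ g s) * P.u g := by push_cast; rw [mul_assoc]
  · intro g
    apply P.cancel g
    rw [← P.comm]; push_cast; simp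
  · funext r
    apply P.cancel 1
    rw [← P.comm]; simp [P.u_one]
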